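/- Let H_A be a Hermitian d_A×d_A matrix and H_B a Hermitian d_B×d_B matrix, each having at least two distinct eigenvalues. For T > 0 write γ_T(H) = exp(−H/T)/tr(exp(−H/T)). Then for T_A, T_B, T > 0, the equality γ_{T_A}(H_A) ⊗ γ_{T_B}(H_B) = γ_T(H_A ⊗ I + I ⊗ H_B) holds if and only if T_A = T_B = T. In particular, the composition of two equilibrium states with the same temperature T is the equilibrium state of the composed system at temperature T, and this is the unique way the product of Gibbs states is itself a Gibbs state of the joint Hamiltonian. -/

import Mathlib

open Kronecker

/-- The Gibbs state of the Hamiltonian `H` at temperature `T > 0`: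
`exp(-H/T) / tr(exp(-H/T))`. -/
noncomputable def gibbsState {n : Type*} [Fintype n] [DecidableEq n]
    (T : ℝ) (H : Matrix n n ℂ) : Matrix n n ℂ :=
  (Matrix.trace (NormedSpace.exp ((-T⁻¹ : ℝ) • H)))⁻¹ •
    NormedSpace.exp ((-T⁻¹ : ℝ) • H)

open Matrix in
lemma star_kronecker {m n : Type*} (A : Matrix m m ℂ) (B : Matrix n n ℂ) :
    star (A ⊗ₖ B) = star A ⊗ₖ star B := by
  ext ⟨i, j⟩ ⟨k, l⟩
  simp [Matrix.star_apply, Matrix.conjTranspose_apply, Matrix.kroneckerMap_apply]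

open Matrix in
lemma gibbs_conj {n : Type*} [Fintype n] [DecidableEq n] (T : ℝ)
    (H u : Matrix n n ℂ) (hu : star u * u = 1) (hu' : u * star u = 1) (a : n → ℝ)
    (hH : H = u * Matrix.diagonal (fun i => ((a i : ℝ) : ℂ)) * star u) :
    gibbsState T H = u * Matrix.diagonal (fun i =>
      (((∑ j, Real.exp (-T⁻¹ * a j) : ℝ) : ℂ))⁻¹ *
        ((Real.exp (-T⁻¹ * a i) : ℝ) : ℂ)) * star u := by
  set U : (Matrix n n ℂ)ˣ := ⟨u, star u, hu', hu⟩ with hU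
  have h1 : (-T⁻¹ : ℝ) • H
      = (U : Matrix n n ℂ) * Matrix.diagonal (fun i => ((-T⁻¹ * a i : ℝ) : ℂ)) * ((U⁻¹ : (Matrix n n ℂ)ˣ) : Matrix n n ℂ) := by
    show (-T⁻¹ : ℝ) • H = u * _ * star u
    rw [hH, ← smul_mul_assoc, ← mul_smul_comm]
    congr 1
    congr 1
    ext i j
    by_cases h : i = j <;> simp [h, Matrix.diagonal_apply, Complex.real_smul] <;> push_cast <;> ring
  have h2 : NormedSpace.exp ((-T⁻¹ : ℝ) • H)
      = u * Matrix.diagonal (fun i => ((Real.exp (-T⁻¹ * a i) : ℝ) : ℂ)) * star u := by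
    rw [h1, Matrix.exp_units_conj, Matrix.exp_diagonal, Pi.exp_def]
    simp only [← Complex.exp_eq_exp_ℂ, Complex.ofReal_exp]
    rfl
  have h3 : Matrix.trace (NormedSpace.exp ((-T⁻¹ : ℝ) • H))
      = (((∑ j, Real.exp (-T⁻¹ * a j) : ℝ) : ℂ)) := by
    rw [h2, Matrix.trace_mul_comm, ← Matrix.mul_assoc, hu, Matrix.one_mul,
      Matrix.trace_diagonal]
    push_cast
    ring
  rw [gibbsState, h3, h2, ← smul_mul_assoc, ← mul_smul_comm]
  congr 1
  congr 1
  ext i j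
  by_cases h : i = j <;> simp [h, Matrix.diagonal_apply]


lemma gibbs_prod_entry {nA nB : Type*} [Fintype nA] [Fintype nB] [Nonempty nA] [Nonempty nB]
    (S : ℝ) (a : nA → ℝ) (b : nB → ℝ) (p : nA × nB) :
    (((∑ j, Real.exp (-S⁻¹ * a j) : ℝ) : ℂ))⁻¹ * ((Real.exp (-S⁻¹ * a p.1) : ℝ) : ℂ) *
      ((((∑ j, Real.exp (-S⁻¹ * b j) : ℝ) : ℂ))⁻¹ * ((Real.exp (-S⁻¹ * b p.2) : ℝ) : ℂ))
    = (((∑ q : nA × nB, Real.exp (-S⁻¹ * (a q.1 + b q.2)) : ℝ) : ℂ))⁻¹ *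
        ((Real.exp (-S⁻¹ * (a p.1 + b p.2)) : ℝ) : ℂ) := by
  have hZfact : (∑ q : nA × nB, Real.exp (-S⁻¹ * (a q.1 + b q.2)))
      = (∑ j, Real.exp (-S⁻¹ * a j)) * (∑ j, Real.exp (-S⁻¹ * b j)) := by
    rw [Fintype.sum_prod_type]
    simp_rw [mul_add, Real.exp_add, ← Finset.mul_sum, ← Finset.sum_mul]
  have hZA : (0:ℝ) < ∑ j, Real.exp (-S⁻¹ * a j) :=
    Finset.sum_pos (fun _ _ => Real.exp_pos _) Finset.univ_nonempty
  have hZB : (0:ℝ) < ∑ j, Real.exp (-S⁻¹ * b j) :=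
    Finset.sum_pos (fun _ _ => Real.exp_pos _) Finset.univ_nonempty
  have hreal : (∑ j, Real.exp (-S⁻¹ * a j))⁻¹ * Real.exp (-S⁻¹ * a p.1) *
      ((∑ j, Real.exp (-S⁻¹ * b j))⁻¹ * Real.exp (-S⁻¹ * b p.2))
      = (∑ q : nA × nB, Real.exp (-S⁻¹ * (a q.1 + b q.2)))⁻¹ *
        Real.exp (-S⁻¹ * (a p.1 + b p.2)) := by
    rw [hZfact, mul_add, Real.exp_add, mul_inv]
    ring
  exact_mod_cast hreal

/-- The tensor product of the Gibbs states of `H_A` at `T_A` and of `H_B` at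
`T_B` is the Gibbs state of the joint Hamiltonian `H_A ⊗ 1 + 1 ⊗ H_B` at
temperature `T` if and only if `T_A = T_B = T`, provided each Hamiltonian has
at least two distinct eigenvalues. -/
theorem stmt_5 (dA dB : ℕ)
    (HA : Matrix (Fin dA) (Fin dA) ℂ) (HB : Matrix (Fin dB) (Fin dB) ℂ)
    (hA : HA.IsHermitian) (hB : HB.IsHermitian)
    (hA2 : ∃ i j, hA.eigenvalues i ≠ hA.eigenvalues j)
    (hB2 : ∃ i j, hB.eigenvalues i ≠ hB.eigenvalues j)
    (TA TB T : ℝ) (hTA : 0 < TA) (hTB : 0 < TB) (hT : 0 < T) :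
    gibbsState TA HA ⊗ₖ gibbsState TB HB =
      gibbsState T (HA ⊗ₖ (1 : Matrix (Fin dB) (Fin dB) ℂ) +
        (1 : Matrix (Fin dA) (Fin dA) ℂ) ⊗ₖ HB) ↔ TA = T ∧ TB = T := by
  obtain ⟨i₀, i₁, hai⟩ := hA2
  obtain ⟨j₀, j₁, hbj⟩ := hB2
  set a := hA.eigenvalues with ha
  set b := hB.eigenvalues with hb
  set uA : Matrix (Fin dA) (Fin dA) ℂ := (hA.eigenvectorUnitary : Matrix (Fin dA) (Fin dA) ℂ) with huAdef
  set uB : Matrix (Fin dB) (Fin dB) ℂ := (hB.eigenvectorUnitary : Matrix (Fin dB) (Fin dB) ℂ) with huBdef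
  have huA : star uA * uA = 1 := Matrix.mem_unitaryGroup_iff'.mp hA.eigenvectorUnitary.2
  have huA' : uA * star uA = 1 := Matrix.mem_unitaryGroup_iff.mp hA.eigenvectorUnitary.2
  have huB : star uB * uB = 1 := Matrix.mem_unitaryGroup_iff'.mp hB.eigenvectorUnitary.2
  have huB' : uB * star uB = 1 := Matrix.mem_unitaryGroup_iff.mp hB.eigenvectorUnitary.2
  have hHA : HA = uA * Matrix.diagonal (fun i => ((a i : ℝ) : ℂ)) * star uA := by
    exact hA.spectral_theorem
  have hHB : HB = uB * Matrix.diagonal (fun i => ((b i : ℝ) : ℂ)) * star uB := by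
    exact hB.spectral_theorem
  set w : Matrix (Fin dA × Fin dB) (Fin dA × Fin dB) ℂ := uA ⊗ₖ uB with hwdef
  have hsw : star w = star uA ⊗ₖ star uB := star_kronecker uA uB
  have hw : star w * w = 1 := by
    rw [hsw, hwdef, ← Matrix.mul_kronecker_mul, huA, huB, Matrix.one_kronecker_one]
  have hw' : w * star w = 1 := by
    rw [hsw, hwdef, ← Matrix.mul_kronecker_mul, huA', huB', Matrix.one_kronecker_one]
  have hHjoint : HA ⊗ₖ (1 : Matrix (Fin dB) (Fin dB) ℂ) +
      (1 : Matrix (Fin dA) (Fin dA) ℂ) ⊗ₖ HB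
      = w * Matrix.diagonal (fun p : Fin dA × Fin dB => ((a p.1 + b p.2 : ℝ) : ℂ)) * star w := by
    have e1 : HA ⊗ₖ (1 : Matrix (Fin dB) (Fin dB) ℂ)
        = w * (Matrix.diagonal (fun i => ((a i : ℝ) : ℂ)) ⊗ₖ (1 : Matrix (Fin dB) (Fin dB) ℂ)) * star w := by
      rw [hsw, hwdef, ← Matrix.mul_kronecker_mul, ← Matrix.mul_kronecker_mul, ← hHA,
        Matrix.mul_one, huB']
    have e2 : (1 : Matrix (Fin dA) (Fin dA) ℂ) ⊗ₖ HB
        = w * ((1 : Matrix (Fin dA) (Fin dA) ℂ) ⊗ₖ Matrix.diagonal (fun i => ((b i : ℝ) : ℂ))) * star w := by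
      rw [hsw, hwdef, ← Matrix.mul_kronecker_mul, ← Matrix.mul_kronecker_mul, ← hHB,
        Matrix.mul_one, huA']
    rw [e1, e2, ← Matrix.add_mul, ← Matrix.mul_add]
    congr 1
    congr 1
    simp only [← Matrix.diagonal_one, Matrix.diagonal_kronecker_diagonal, Matrix.diagonal_add]
    exact Matrix.diagonal_eq_diagonal_iff.mpr fun p => by push_cast; ring
  have hGA := gibbs_conj TA HA uA huA huA' a hHA
  have hGB := gibbs_conj TB HB uB huB huB' b hHB
  have hG := gibbs_conj T _ w hw hw' (fun p : Fin dA × Fin dB => a p.1 + b p.2) hHjoint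
  set ZA : ℝ := ∑ j, Real.exp (-TA⁻¹ * a j) with hZA
  set ZB : ℝ := ∑ j, Real.exp (-TB⁻¹ * b j) with hZB
  set Z : ℝ := ∑ p : Fin dA × Fin dB, Real.exp (-T⁻¹ * (a p.1 + b p.2)) with hZ
  have hL : gibbsState TA HA ⊗ₖ gibbsState TB HB
      = w * Matrix.diagonal (fun p : Fin dA × Fin dB =>
          ((ZA : ℂ)⁻¹ * ((Real.exp (-TA⁻¹ * a p.1) : ℝ) : ℂ)) *
          ((ZB : ℂ)⁻¹ * ((Real.exp (-TB⁻¹ * b p.2) : ℝ) : ℂ))) * star w := by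
    rw [hGA, hGB, Matrix.mul_kronecker_mul, Matrix.mul_kronecker_mul,
      Matrix.diagonal_kronecker_diagonal, ← hsw, ← hwdef]
  have hD : ∀ D : Matrix (Fin dA × Fin dB) (Fin dA × Fin dB) ℂ,
      star w * (w * D * star w) * w = D := by
    intro D
    simp only [Matrix.mul_assoc]
    rw [hw]
    simp only [Matrix.mul_one]
    rw [← Matrix.mul_assoc, hw, Matrix.one_mul]
  have cancel : ∀ D D' : Matrix (Fin dA × Fin dB) (Fin dA × Fin dB) ℂ,
      w * D * star w = w * D' * star w ↔ D = D' := by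
    intro D D'
    constructor
    · intro h
      have h2 := congrArg (fun M => star w * M * w) h
      simpa only [hD] using h2
    · intro h; rw [h]
  have hZApos : 0 < ZA := Finset.sum_pos (fun _ _ => Real.exp_pos _) ⟨i₀, Finset.mem_univ _⟩
  have hZBpos : 0 < ZB := Finset.sum_pos (fun _ _ => Real.exp_pos _) ⟨j₀, Finset.mem_univ _⟩
  have hZpos : 0 < Z := Finset.sum_pos (fun _ _ => Real.exp_pos _) ⟨(i₀, j₀), Finset.mem_univ _⟩
  rw [hL, hG, cancel, Matrix.diagonal_eq_diagonal_iff]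
  constructor
  · intro h
    have hP : ∀ i j, ZA⁻¹ * Real.exp (-TA⁻¹ * a i) * (ZB⁻¹ * Real.exp (-TB⁻¹ * b j))
        = Z⁻¹ * Real.exp (-T⁻¹ * (a i + b j)) := by
      intro i j
      have := h (i, j)
      push_cast at this
      exact_mod_cast this
    have hTAeq : TA = T := by
      have h0 := hP i₀ j₀
      have h1 := hP i₁ j₀
      have hcross : (Real.exp (-TA⁻¹ * a i₀) * Real.exp (-T⁻¹ * (a i₁ + b j₀))) *
            (ZB⁻¹ * Real.exp (-TB⁻¹ * b j₀) * ZA⁻¹ * Z⁻¹)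
          = (Real.exp (-TA⁻¹ * a i₁) * Real.exp (-T⁻¹ * (a i₀ + b j₀))) *
            (ZB⁻¹ * Real.exp (-TB⁻¹ * b j₀) * ZA⁻¹ * Z⁻¹) := by
        linear_combination (Z⁻¹ * Real.exp (-T⁻¹ * (a i₁ + b j₀))) * h0 -
          (Z⁻¹ * Real.exp (-T⁻¹ * (a i₀ + b j₀))) * h1
      have hpos : (0:ℝ) < ZB⁻¹ * Real.exp (-TB⁻¹ * b j₀) * ZA⁻¹ * Z⁻¹ :=
        mul_pos (mul_pos (mul_pos (inv_pos.mpr hZBpos) (Real.exp_pos _)) (inv_pos.mpr hZApos)) (inv_pos.mpr hZpos)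
      have hkey := mul_right_cancel₀ (ne_of_gt hpos) hcross
      rw [← Real.exp_add, ← Real.exp_add, Real.exp_eq_exp] at hkey
      have hfac : (a i₀ - a i₁) * (TA⁻¹ - T⁻¹) = 0 := by linear_combination -hkey
      rcases mul_eq_zero.mp hfac with h' | h'
      · exact absurd (sub_eq_zero.mp h') hai
      · exact inv_injective (sub_eq_zero.mp h')
    have hTBeq : TB = T := by
      have h0 := hP i₀ j₀
      have h1 := hP i₀ j₁
      have hcross : (Real.exp (-TB⁻¹ * b j₀) * Real.exp (-T⁻¹ * (a i₀ + b j₁))) *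
            (ZA⁻¹ * Real.exp (-TA⁻¹ * a i₀) * ZB⁻¹ * Z⁻¹)
          = (Real.exp (-TB⁻¹ * b j₁) * Real.exp (-T⁻¹ * (a i₀ + b j₀))) *
            (ZA⁻¹ * Real.exp (-TA⁻¹ * a i₀) * ZB⁻¹ * Z⁻¹) := by
        linear_combination (Z⁻¹ * Real.exp (-T⁻¹ * (a i₀ + b j₁))) * h0 -
          (Z⁻¹ * Real.exp (-T⁻¹ * (a i₀ + b j₀))) * h1
      have hpos : (0:ℝ) < ZA⁻¹ * Real.exp (-TA⁻¹ * a i₀) * ZB⁻¹ * Z⁻¹ :=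
        mul_pos (mul_pos (mul_pos (inv_pos.mpr hZApos) (Real.exp_pos _)) (inv_pos.mpr hZBpos)) (inv_pos.mpr hZpos)
      have hkey := mul_right_cancel₀ (ne_of_gt hpos) hcross
      rw [← Real.exp_add, ← Real.exp_add, Real.exp_eq_exp] at hkey
      have hfac : (b j₀ - b j₁) * (TB⁻¹ - T⁻¹) = 0 := by linear_combination -hkey
      rcases mul_eq_zero.mp hfac with h' | h'
      · exact absurd (sub_eq_zero.mp h') hbj
      · exact inv_injective (sub_eq_zero.mp h')
    exact ⟨hTAeq, hTBeq⟩
  · rintro ⟨rfl, rfl⟩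
    intro p
    have : Nonempty (Fin dA) := ⟨i₀⟩
    have : Nonempty (Fin dB) := ⟨j₀⟩
    exact gibbs_prod_entry _ a b p
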